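/- In the i.i.d. concept model with P = N^r concepts and M = N^γ strokes (r, γ > 0, L and t fixed with t + ρ < (1−δ)L): (i) if γ > r/(t+1) and P(G_α(δ,ρ)^c) → 0, then P(α̂(x) ≠ α) → 0 for any fixed target α; the overlap error term P·C(L,t+1)·(L/M)^{t+1} is of order N^{r−γ(t+1)} → 0. -/

import Mathlib

open Filter

/-- Polynomial growth regimes (fixed target concept): with `P = N^r` concepts and
`M = N^γ` strokes, fixed `L`, `t`, margin `t + ρ < (1-δ)L`, and `γ > r/(t+1)`: the
overlap error term `N^r · C(L,t+1) · (L/N^γ)^(t+1)` tends to `0`, and whenever the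
retrieval error is bounded by this term plus `P(G_α(δ,ρ)ᶜ) → 0`, the retrieval error
`P(α̂(x) ≠ α)` tends to `0`. -/
theorem stmt10 (L t ρ : ℕ) (δ : ℝ) (hδ0 : 0 < δ) (hδ1 : δ < 1) (ht : t ≤ L - 1)
    (hmargin : (t : ℝ) + (ρ : ℝ) < (1 - δ) * L)
    (r γ : ℝ) (hr : 0 < r) (hγ : r / (t + 1) < γ)
    (err perr : ℕ → ENNReal)
    (herr : Tendsto err atTop (nhds 0))
    (hbound : ∀ N : ℕ, 2 ≤ N →
      perr N ≤ ENNReal.ofReal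
          ((N : ℝ) ^ r * (L.choose (t + 1) : ℝ) * ((L : ℝ) / (N : ℝ) ^ γ) ^ (t + 1))
        + err N) :
    Tendsto (fun N : ℕ =>
        (N : ℝ) ^ r * (L.choose (t + 1) : ℝ) * ((L : ℝ) / (N : ℝ) ^ γ) ^ (t + 1))
      atTop (nhds 0) ∧
    Tendsto perr atTop (nhds 0) := by

  have hexp : (0:ℝ) < γ * (t + 1) - r := by
    have h1 : (0:ℝ) < (t:ℝ) + 1 := by positivity
    have := (div_lt_iff₀ h1).mp hγ
    nlinarith
  have h1 : Tendsto (fun N : ℕ => (N : ℝ) ^ (r - γ * (t + 1))) atTop (nhds 0) := by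
    have := tendsto_rpow_neg_atTop hexp
    have h2 := this.comp tendsto_natCast_atTop_atTop (α := ℕ)
    simpa [neg_sub, Function.comp_def] using h2
  have hmain : Tendsto (fun N : ℕ =>
      (N : ℝ) ^ r * (L.choose (t + 1) : ℝ) * ((L : ℝ) / (N : ℝ) ^ γ) ^ (t + 1))
      atTop (nhds 0) := by
    have h2 : Tendsto (fun N : ℕ =>
        (L.choose (t + 1) : ℝ) * (L : ℝ) ^ (t + 1) * (N : ℝ) ^ (r - γ * (t + 1)))
        atTop (nhds 0) := by
      simpa using h1.const_mul ((L.choose (t + 1) : ℝ) * (L : ℝ) ^ (t + 1))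
    apply h2.congr'
    filter_upwards [eventually_ge_atTop 1] with N hN
    have hNpos : (0:ℝ) < (N:ℝ) := by exact_mod_cast hN
    have key : ((N:ℝ) ^ γ) ^ (t + 1) = (N:ℝ) ^ (γ * ((t:ℝ) + 1)) := by
      rw [← Real.rpow_natCast ((N:ℝ) ^ γ) (t+1), ← Real.rpow_mul hNpos.le]
      push_cast; ring_nf
    rw [div_pow, key, Real.rpow_sub hNpos]
    have hpow : (0:ℝ) < (N:ℝ) ^ (γ * ((t:ℝ) + 1)) := Real.rpow_pos_of_pos hNpos _
    field_simp
  refine ⟨hmain, ?_⟩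
  have hsum : Tendsto (fun N : ℕ => ENNReal.ofReal
      ((N : ℝ) ^ r * (L.choose (t + 1) : ℝ) * ((L : ℝ) / (N : ℝ) ^ γ) ^ (t + 1)) + err N)
      atTop (nhds 0) := by
    have := (ENNReal.tendsto_ofReal hmain).add herr
    simpa using this
  refine tendsto_of_tendsto_of_tendsto_of_le_of_le' tendsto_const_nhds hsum ?_ ?_
  · filter_upwards with N; exact zero_le
  · filter_upwards [eventually_ge_atTop 2] with N hN; exact hbound N hN
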